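/- arXiv:2205.04803 — 3 statements merged into one kernel-verified Lean document; each statement's English description precedes it below -/
import Mathlib

section
/- The matrix function X(t) satisfies the variational equation X′(t) = JD²H(x^h(t)) X(t) for all t ∈ I, and det X(t) = 1 for all t ∈ I; in particular, X(t) is a fundamental matrix of the linearization ξ̇ = JD²H(x^h(t))ξ along x^h. -/
open Matrix

/-- First partial derivative `∂H/∂x₁`. -/
noncomputable def D1 (H : ℝ × ℝ → ℝ) (x : ℝ × ℝ) : ℝ := fderiv ℝ H x (1, 0)

/-- Second partial derivative `∂H/∂x₂`. -/
noncomputable def D2 (H : ℝ × ℝ → ℝ) (x : ℝ × ℝ) : ℝ := fderiv ℝ H x (0, 1)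

/-- The matrix `J D²H(x^h(t))` of the variational equation, where `J = [[0,1],[−1,0]]`. -/
noncomputable def varMatrix (H : ℝ × ℝ → ℝ) (xh : ℝ → ℝ × ℝ) (t : ℝ) :
    Matrix (Fin 2) (Fin 2) ℝ :=
  !![D1 (D2 H) (xh t), D2 (D2 H) (xh t);
     -(D1 (D1 H) (xh t)), -(D2 (D1 H) (xh t))]

/-- The matrix `X(t)` with first column `JDH(x^h(t)) = (∂₂H, −∂₁H)ᵀ` and second column
`χ(t)·JDH(x^h(t)) + (0, 1/∂₂H(x^h(t)))ᵀ`. -/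
noncomputable def fundMatrix (H : ℝ × ℝ → ℝ) (xh : ℝ → ℝ × ℝ) (χ : ℝ → ℝ) (t : ℝ) :
    Matrix (Fin 2) (Fin 2) ℝ :=
  !![D2 H (xh t), χ t * D2 H (xh t);
     -(D1 H (xh t)), -(χ t * D1 H (xh t)) + (D2 H (xh t))⁻¹]

lemma D_symm (H : ℝ × ℝ → ℝ) (hH : ContDiff ℝ 2 H) (x : ℝ × ℝ) :
    D1 (D2 H) x = D2 (D1 H) x := by
  have hsym := (hH.contDiffAt (x := x)).isSymmSndFDerivAt (by simp [minSmoothness_of_isRCLikeNormedField])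
  have hd : DifferentiableAt ℝ (fderiv ℝ H) x :=
    ((hH.fderiv_right (m := 1) (by norm_num)).differentiable one_ne_zero) x
  have h1 : fderiv ℝ (fun y => fderiv ℝ H y (0,1)) x =
      (fderiv ℝ (fderiv ℝ H) x).flip (0,1) := by
    rw [fderiv_clm_apply hd (differentiableAt_const _)]; simp
  have h2 : fderiv ℝ (fun y => fderiv ℝ H y (1,0)) x =
      (fderiv ℝ (fderiv ℝ H) x).flip (1,0) := by
    rw [fderiv_clm_apply hd (differentiableAt_const _)]; simp
  simp only [D1, D2]
  rw [show (fun y => fderiv ℝ H y ((0:ℝ),(1:ℝ))) = D2 H from rfl] at h1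
  rw [show (fun y => fderiv ℝ H y ((1:ℝ),(0:ℝ))) = D1 H from rfl] at h2
  rw [h1, h2]
  exact hsym (1,0) (0,1)

/-- `X(t)` solves the variational equation `X′ = J D²H(x^h(t)) X` on `I` and has
determinant `1` there; in particular it is a fundamental matrix of the linearization
`ξ̇ = J D²H(x^h(t)) ξ` along `x^h`. -/
theorem fundMatrix_solves_variational_eq
    (H : ℝ × ℝ → ℝ) (hH : ContDiff ℝ 2 H)
    (I : Set ℝ) (hIopen : IsOpen I) (hIconn : I.OrdConnected)
    (xh : ℝ → ℝ × ℝ)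
    (hxh : ∀ t ∈ I, HasDerivAt xh (D2 H (xh t), -(D1 H (xh t))) t)
    (hne : ∀ t ∈ I, D2 H (xh t) ≠ 0)
    (χ : ℝ → ℝ)
    (hχ : ∀ t ∈ I, HasDerivAt χ (D2 (D2 H) (xh t) / (D2 H (xh t)) ^ 2) t) :
    ∀ t ∈ I,
      (∀ i j : Fin 2,
        HasDerivAt (fun s => fundMatrix H xh χ s i j)
          ((varMatrix H xh t * fundMatrix H xh χ t) i j) t) ∧
      (fundMatrix H xh χ t).det = 1 := by
  intro t ht
  have hp0 : D2 H (xh t) ≠ 0 := hne t ht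
  have hH1 : ContDiff ℝ 1 (fderiv ℝ H) := hH.fderiv_right (by norm_num)
  have hD1 : ContDiff ℝ 1 (D1 H) := hH1.clm_apply contDiff_const
  have hD2 : ContDiff ℝ 1 (D2 H) := hH1.clm_apply contDiff_const
  have key : ∀ g : (ℝ × ℝ) → ℝ, DifferentiableAt ℝ g (xh t) →
      HasDerivAt (fun s => g (xh s))
        (D2 H (xh t) * D1 g (xh t) - D1 H (xh t) * D2 g (xh t)) t := by
    intro g hg
    have h := hg.hasFDerivAt.comp_hasDerivAt t (hxh t ht)
    refine h.congr_deriv ?_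
    have hv : ((D2 H (xh t), -(D1 H (xh t))) : ℝ × ℝ)
        = D2 H (xh t) • ((1:ℝ),(0:ℝ)) + (-(D1 H (xh t))) • ((0:ℝ),(1:ℝ)) := by
      simp
    rw [hv, map_add, _root_.map_smul, _root_.map_smul]
    simp only [D1, D2, smul_eq_mul]
    ring
  have hp' := key (D2 H) ((hD2.differentiable one_ne_zero) _)
  have hq' := key (D1 H) ((hD1.differentiable one_ne_zero) _)
  have hχ' := hχ t ht
  have hsymm := D_symm H hH (xh t)
  constructor
  · intro i j
    fin_cases i <;> fin_cases j <;>
      simp [fundMatrix, varMatrix, Matrix.mul_apply, Fin.sum_univ_two]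
    · convert hp' using 1; ring
    · have := hχ'.mul hp'
      refine this.congr_deriv ?_
      field_simp
      ring
    · refine hq'.neg.congr_deriv ?_; ring
    · have := ((hχ'.mul hq').neg).add (hp'.inv hp0)
      refine this.congr_deriv ?_
      rw [hsymm] at *
      field_simp
      ring
  · simp only [fundMatrix, Matrix.det_fin_two_of]
    field_simp
    ring
end

section
/- The 3×3 matrix function Ψ(t) = [[X(t), X(t)Y(t)], [0, e^{iℓωt}]] satisfies Ψ′(t) = A_ℓ(t)Ψ(t) for all t ∈ I, where A_ℓ(t) is the 3×3 block matrix [[JD²H(x^h(t)), ĝ_ℓ(x^h(t))], [0, iℓω]], and det Ψ(t) = e^{iℓωt} ≠ 0; in particular Ψ is a fundamental matrix of the variational system ξ̇ = JD²H(x^h(t))ξ + ĝ_ℓ(x^h(t))η, η̇ = iℓωη. -/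
open Matrix

/-- The matrix `X(t)` (complexified) with first column `JDH(x^h(t))` and second column
`χ(t)·JDH(x^h(t)) + (0, 1/∂₂H(x^h(t)))ᵀ`. -/
noncomputable def Xc (H : ℝ × ℝ → ℝ) (xh : ℝ → ℝ × ℝ) (χ : ℝ → ℝ) (t : ℝ) :
    Matrix (Fin 2) (Fin 2) ℂ :=
  (!![D2 H (xh t), χ t * D2 H (xh t);
      -(D1 H (xh t)), -(χ t * D1 H (xh t)) + (D2 H (xh t))⁻¹]).map Complex.ofReal

/-- The 3×3 coefficient matrix `A_ℓ(t) = [[J D²H(x^h(t)), ĝ_ℓ(x^h(t))], [0, iℓω]]`. -/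
noncomputable def coeffMatrix (H : ℝ × ℝ → ℝ) (xh : ℝ → ℝ × ℝ)
    (gl : ℝ × ℝ → Fin 2 → ℂ) (ω : ℝ) (ℓ : ℤ) (t : ℝ) : Matrix (Fin 3) (Fin 3) ℂ :=
  !![(varMatrix H xh t 0 0 : ℂ), (varMatrix H xh t 0 1 : ℂ), gl (xh t) 0;
     (varMatrix H xh t 1 0 : ℂ), (varMatrix H xh t 1 1 : ℂ), gl (xh t) 1;
     0, 0, Complex.I * ℓ * ω]

/-- The 3×3 matrix `Ψ(t) = [[X(t), X(t)Y(t)], [0, e^{iℓωt}]]`. -/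
noncomputable def Psi (H : ℝ × ℝ → ℝ) (xh : ℝ → ℝ × ℝ) (χ : ℝ → ℝ)
    (Y : ℝ → Fin 2 → ℂ) (ω : ℝ) (ℓ : ℤ) (t : ℝ) : Matrix (Fin 3) (Fin 3) ℂ :=
  !![Xc H xh χ t 0 0, Xc H xh χ t 0 1, (Xc H xh χ t *ᵥ Y t) 0;
     Xc H xh χ t 1 0, Xc H xh χ t 1 1, (Xc H xh χ t *ᵥ Y t) 1;
     0, 0, Complex.exp (Complex.I * ℓ * ω * t)]

lemma clm_eval (L : ℝ × ℝ →L[ℝ] ℝ) (u v : ℝ) :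
    L (u, v) = u * L (1, 0) + v * L (0, 1) := by
  have h : ((u, v) : ℝ × ℝ) = u • ((1:ℝ), (0:ℝ)) + v • ((0:ℝ), (1:ℝ)) := by
    simp [Prod.ext_iff]
  rw [h, map_add, L.map_smul, L.map_smul, smul_eq_mul, smul_eq_mul]

lemma contDiff_D (H : ℝ × ℝ → ℝ) (hH : ContDiff ℝ 2 H) (v : ℝ × ℝ) :
    ContDiff ℝ 1 (fun x => fderiv ℝ H x v) :=
  (hH.fderiv_right (by norm_num)).clm_apply contDiff_const

lemma hasDerivAt_comp_D (H : ℝ × ℝ → ℝ) (hH : ContDiff ℝ 2 H) (v : ℝ × ℝ)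
    (xh : ℝ → ℝ × ℝ) (t : ℝ) (u w : ℝ) (hx : HasDerivAt xh (u, w) t) :
    HasDerivAt (fun s => fderiv ℝ H (xh s) v)
      (u * fderiv ℝ (fun y => fderiv ℝ H y v) (xh t) (1,0)
        + w * fderiv ℝ (fun y => fderiv ℝ H y v) (xh t) (0,1)) t := by
  have hd := ((contDiff_D H hH v).differentiable (by norm_num) (xh t)).hasFDerivAt
  have := hd.comp_hasDerivAt t hx
  have heq : fderiv ℝ (fun y => fderiv ℝ H y v) (xh t) (u, w)
      = u * fderiv ℝ (fun y => fderiv ℝ H y v) (xh t) (1,0)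
        + w * fderiv ℝ (fun y => fderiv ℝ H y v) (xh t) (0,1) := clm_eval _ u w
  rw [← heq]
  exact this

lemma fin3_two (h : 2 < 3) : (⟨2, h⟩ : Fin 3) = 2 := rfl

/-- `Ψ(t) = [[X(t), X(t)Y(t)], [0, e^{iℓωt}]]` solves `Ψ′ = A_ℓ(t) Ψ` on `I` and
`det Ψ(t) = e^{iℓωt} ≠ 0`; in particular it is a fundamental matrix of the variational
system `ξ̇ = J D²H(x^h(t)) ξ + ĝ_ℓ(x^h(t)) η, η̇ = iℓω η`. -/
theorem Psi_fundamental_matrix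
    (H : ℝ × ℝ → ℝ) (hH : ContDiff ℝ 2 H)
    (I : Set ℝ) (hIopen : IsOpen I) (hIconn : I.OrdConnected)
    (xh : ℝ → ℝ × ℝ)
    (hxh : ∀ t ∈ I, HasDerivAt xh (D2 H (xh t), -(D1 H (xh t))) t)
    (hne : ∀ t ∈ I, D2 H (xh t) ≠ 0)
    (χ : ℝ → ℝ)
    (hχ : ∀ t ∈ I, HasDerivAt χ (D2 (D2 H) (xh t) / (D2 H (xh t)) ^ 2) t)
    (ω : ℝ) (hω : 0 < ω) (ℓ : ℤ)
    (gl : ℝ × ℝ → Fin 2 → ℂ) (hgl : Continuous fun x => gl x)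
    (Y : ℝ → Fin 2 → ℂ)
    (hY : ∀ t ∈ I, ∀ i : Fin 2,
      HasDerivAt (fun s => Y s i)
        (((Xc H xh χ t)⁻¹ *ᵥ gl (xh t)) i * Complex.exp (Complex.I * ℓ * ω * t)) t) :
    ∀ t ∈ I,
      (∀ i j : Fin 3,
        HasDerivAt (fun s => Psi H xh χ Y ω ℓ s i j)
          ((coeffMatrix H xh gl ω ℓ t * Psi H xh χ Y ω ℓ t) i j) t) ∧
      (Psi H xh χ Y ω ℓ t).det = Complex.exp (Complex.I * ℓ * ω * t) ∧
      Complex.exp (Complex.I * ℓ * ω * t) ≠ 0 := by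
  intro t ht
  have hq : D2 H (xh t) ≠ 0 := hne t ht
  have hqC : (D2 H (xh t) : ℂ) ≠ 0 := Complex.ofReal_ne_zero.mpr hq
  have hx := hxh t ht
  have hQ : HasDerivAt (fun s => D2 H (xh s))
      (D2 H (xh t) * D1 (D2 H) (xh t) + -(D1 H (xh t)) * D2 (D2 H) (xh t)) t := by
    have := hasDerivAt_comp_D H hH (0,1) xh t _ _ hx
    exact this
  have hP : HasDerivAt (fun s => D1 H (xh s))
      (D2 H (xh t) * D1 (D1 H) (xh t) + -(D1 H (xh t)) * D2 (D1 H) (xh t)) t := by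
    have := hasDerivAt_comp_D H hH (1,0) xh t _ _ hx
    exact this
  have hχt := hχ t ht
  have had := D_symm H hH (xh t)
  have hdet : (Xc H xh χ t).det = 1 := by
    simp only [Xc, Matrix.det_fin_two, Matrix.map_apply, Matrix.cons_val', Matrix.cons_val_zero,
      Matrix.cons_val_one, Matrix.head_cons, Matrix.empty_val', Matrix.cons_val_fin_one,
      Matrix.head_fin_const, Matrix.of_apply]
    push_cast
    field_simp
    ring
  set v : Fin 2 → ℂ := (Xc H xh χ t)⁻¹ *ᵥ gl (xh t) with hv
  have hXg : Xc H xh χ t *ᵥ v = gl (xh t) := by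
    rw [hv, Matrix.mulVec_mulVec, Matrix.mul_nonsing_inv _ (by rw [hdet]; exact isUnit_one),
      Matrix.one_mulVec]
  have hg0 := congrFun hXg 0
  have hg1 := congrFun hXg 1
  simp only [Xc, Matrix.mulVec, dotProduct, Fin.sum_univ_two, Matrix.map_apply,
    Matrix.cons_val', Matrix.cons_val_zero, Matrix.cons_val_one, Matrix.head_cons,
    Matrix.empty_val', Matrix.cons_val_fin_one, Matrix.head_fin_const, Matrix.of_apply] at hg0 hg1
  have hY0 := hY t ht 0
  have hY1 := hY t ht 1
  rw [← hv] at hY0 hY1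
  have hE : HasDerivAt (fun s : ℝ => Complex.exp (Complex.I * ℓ * ω * s))
      (Complex.I * ℓ * ω * Complex.exp (Complex.I * ℓ * ω * t)) t := by
    have h1 : HasDerivAt (fun s : ℝ => (Complex.I * ℓ * ω) * (s:ℂ)) (Complex.I * ℓ * ω) t := by
      simpa using (Complex.ofRealCLM.hasDerivAt (x := t)).const_mul (Complex.I * (ℓ:ℂ) * ω)
    simpa [mul_comm] using h1.cexp
  refine ⟨?_, ?_, Complex.exp_ne_zero _⟩
  · intro i j
    fin_cases i <;> fin_cases j <;>
      simp only [Psi, Xc, coeffMatrix, varMatrix, Matrix.mul_apply, Fin.sum_univ_three,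
        Matrix.mulVec, dotProduct, Fin.sum_univ_two, Matrix.map_apply, Matrix.cons_val',
        Matrix.cons_val_zero, Matrix.cons_val_one, Matrix.head_cons, Matrix.empty_val',
        Matrix.cons_val_fin_one, Matrix.head_fin_const, Matrix.of_apply, Fin.isValue,
        Fin.mk_one, Fin.mk_zero, Matrix.cons_val_two, Matrix.tail_cons, fin3_two]
    · convert hQ.ofReal_comp using 1
      push_cast; ring
    · convert (hχt.mul hQ).ofReal_comp using 1
      · rfl
      push_cast; field_simp; ring
    · convert (hQ.ofReal_comp.mul hY0).add (((hχt.mul hQ).ofReal_comp).mul hY1) using 1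
      · rfl
      · rfl
      rw [← hg0]; simp only [Pi.mul_apply, Pi.neg_apply, Pi.add_apply, Pi.inv_apply]; push_cast; field_simp; ring
    · convert hP.neg.ofReal_comp using 1
      · rfl
      push_cast; ring
    · convert ((hχt.mul hP).neg.add (hQ.inv hq)).ofReal_comp using 1
      · rfl
      rw [← had]; push_cast; field_simp; ring
    · convert (hP.neg.ofReal_comp.mul hY0).add
        ((((hχt.mul hP).neg.add (hQ.inv hq)).ofReal_comp).mul hY1) using 1
      · rfl
      · rfl
      rw [← hg1, ← had]; simp only [Pi.mul_apply, Pi.neg_apply, Pi.add_apply, Pi.inv_apply]; push_cast; field_simp; ring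
    · convert hasDerivAt_const t (0:ℂ) using 1
      · rfl
      ring
    · convert hasDerivAt_const t (0:ℂ) using 1
      · rfl
      ring
    · convert hE using 1
      ring
  · simp only [Psi, Xc, Matrix.det_fin_three, Matrix.map_apply, Matrix.cons_val',
      Matrix.cons_val_zero, Matrix.cons_val_one, Matrix.head_cons, Matrix.empty_val',
      Matrix.cons_val_fin_one, Matrix.head_fin_const, Matrix.of_apply, Matrix.cons_val_two,
      Matrix.tail_cons]
    push_cast
    field_simp
    ring
end

section
/- For every a > 0, ∫_{−∞}^{∞} sech²(t) cos(at) dt = πa / sinh(πa/2). -/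
open Real MeasureTheory Set

lemma sech_deriv (t : ℝ) :
    HasDerivAt (fun t : ℝ => (1 + Real.exp (-2*t))⁻¹) (((Real.cosh t)⁻¹) ^ 2 / 2) t := by
  have he : HasDerivAt (fun t : ℝ => 1 + Real.exp (-2*t)) (-2 * Real.exp (-2*t)) t := by
    have := ((Real.hasDerivAt_exp (-2*t)).comp t ((hasDerivAt_id t).const_mul (-2))).const_add 1
    simpa [mul_comm] using this
  have h0 : (1 + Real.exp (-2*t)) ≠ 0 := by positivity
  have := he.inv h0
  refine this.congr_deriv ?_
  symm
  rw [Real.cosh_eq]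
  have h1 : Real.exp t + Real.exp (-t) ≠ 0 := by positivity
  have h2 : Real.exp (-2*t) = Real.exp (-t) * Real.exp (-t) := by
    rw [← Real.exp_add]; ring_nf
  have h3 : Real.exp t * Real.exp (-t) = 1 := by
    rw [← Real.exp_add]; simp
  rw [h2]
  have h0' : (1 + Real.exp (-t) * Real.exp (-t)) ≠ 0 := by positivity
  field_simp
  ring_nf
  linear_combination (-(Real.exp t*Real.exp (-t)) - 1 - 2*Real.exp (-t)^2) * h3

lemma f_image : (fun t : ℝ => (1 + Real.exp (-2*t))⁻¹) '' Set.univ = Set.Ioo 0 1 := by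
  rw [Set.image_univ]
  ext x
  simp only [Set.mem_range, Set.mem_Ioo]
  constructor
  · rintro ⟨t, rfl⟩
    have h := Real.exp_pos (-2*t)
    constructor
    · positivity
    · rw [inv_lt_one_iff₀]; right; linarith
  · rintro ⟨hx0, hx1⟩
    refine ⟨Real.log (x/(1-x)) / 2, ?_⟩
    have h1x : 0 < 1 - x := by linarith
    have : -2 * (Real.log (x/(1-x)) / 2) = Real.log ((x/(1-x))⁻¹) := by
      rw [Real.log_inv]; ring
    rw [this, Real.exp_log (by positivity)]
    field_simp
    ring

lemma f_inj : Set.InjOn (fun t : ℝ => (1 + Real.exp (-2*t))⁻¹) Set.univ := by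
  intro s _ t _ h
  simp only at h
  have hs : (0:ℝ) < 1 + Real.exp (-2*s) := by positivity
  have ht : (0:ℝ) < 1 + Real.exp (-2*t) := by positivity
  have := inv_injective h
  have h2 : Real.exp (-2*s) = Real.exp (-2*t) := by linarith
  have := Real.exp_injective h2
  linarith

lemma stepA (a : ℝ) :
    ∫ t : ℝ, ((Real.cosh t)⁻¹) ^ 2 * Real.cos (a * t)
      = ∫ x in Set.Ioo (0:ℝ) 1, 2 * Real.cos (a/2 * Real.log (x/(1-x))) := by
  have := MeasureTheory.integral_image_eq_integral_abs_deriv_smul MeasurableSet.univ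
    (fun t _ => (sech_deriv t).hasDerivWithinAt)
    f_inj (fun x => 2 * Real.cos (a/2 * Real.log (x/(1-x))))
  rw [f_image] at this
  rw [this, MeasureTheory.setIntegral_univ]
  congr 1
  ext t
  have h0 : (0:ℝ) < 1 + Real.exp (-2*t) := by positivity
  have hratio : (1 + Real.exp (-2*t))⁻¹ / (1 - (1 + Real.exp (-2*t))⁻¹) = Real.exp (2*t) := by
    have he : Real.exp (-2*t) * Real.exp (2*t) = 1 := by
      rw [← Real.exp_add]; norm_num
    have hlt : (1 + Real.exp (-2*t))⁻¹ < 1 := by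
      rw [inv_lt_one_iff₀]; right; have := Real.exp_pos (-2*t); linarith
    have hpos : 0 < (1 + Real.exp (-2*t))⁻¹ := by positivity
    have hne : 1 - (1 + Real.exp (-2*t))⁻¹ ≠ 0 := by linarith
    rw [div_eq_iff hne]
    field_simp
    have hmm : Real.exp (-(2*t)) = Real.exp (-2*t) := by norm_num
    rw [hmm]
    linear_combination -he
  rw [hratio, Real.log_exp]
  have habs : |((Real.cosh t)⁻¹) ^ 2 / 2| = ((Real.cosh t)⁻¹) ^ 2 / 2 := by
    have := Real.cosh_pos t
    rw [abs_of_nonneg]; positivity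
  rw [habs, smul_eq_mul]
  ring

lemma pointwiseB (a : ℝ) {x : ℝ} (hx : x ∈ Set.Ioo (0:ℝ) 1) :
    2 * Real.cos (a/2 * Real.log (x/(1-x)))
      = 2 * ((x:ℂ) ^ ((1 + Complex.I*a/2) - 1) * (1-(x:ℂ)) ^ ((1 - Complex.I*a/2) - 1)).re := by
  obtain ⟨hx0, hx1⟩ := hx
  have h1x : (0:ℝ) < 1 - x := by linarith
  have hxC : (x:ℂ) ≠ 0 := by exact_mod_cast hx0.ne'
  have h1xC : (1 - (x:ℂ)) = ((1-x:ℝ):ℂ) := by push_cast; ring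
  have h1xC' : (1 - (x:ℂ)) ≠ 0 := by rw [h1xC]; exact_mod_cast h1x.ne'
  rw [Complex.cpow_def_of_ne_zero hxC, Complex.cpow_def_of_ne_zero h1xC', ← Complex.exp_add]
  rw [h1xC, ← Complex.ofReal_log hx0.le, ← Complex.ofReal_log h1x.le]
  have harg : (Real.log x : ℂ) * ((1 + Complex.I*a/2) - 1)
      + (Real.log (1-x) : ℂ) * ((1 - Complex.I*a/2) - 1)
      = ((a/2 * (Real.log x - Real.log (1-x)) : ℝ) : ℂ) * Complex.I := by
    push_cast; ring
  rw [harg, Complex.exp_ofReal_mul_I_re, Real.log_div hx0.ne' h1x.ne']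

lemma stepB (a : ℝ) :
    ∫ x in Set.Ioo (0:ℝ) 1, 2 * Real.cos (a/2 * Real.log (x/(1-x)))
      = 2 * (Complex.betaIntegral (1 + Complex.I*a/2) (1 - Complex.I*a/2)).re := by
  have hu : 0 < (1 + Complex.I*a/2).re := by simp
  have hv : 0 < (1 - Complex.I*a/2).re := by simp
  have hint := Complex.betaIntegral_convergent hu hv
  have hIoc : MeasureTheory.IntegrableOn
      (fun x : ℝ => (x:ℂ) ^ ((1 + Complex.I*a/2) - 1) * (1-(x:ℂ)) ^ ((1 - Complex.I*a/2) - 1))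
      (Set.Ioc (0:ℝ) 1) := by
    simpa [intervalIntegrable_iff_integrableOn_Ioc_of_le zero_le_one] using hint
  have hIoo := hIoc.mono_set Set.Ioo_subset_Ioc_self
  have h1 : Complex.betaIntegral (1 + Complex.I*a/2) (1 - Complex.I*a/2)
      = ∫ x in Set.Ioo (0:ℝ) 1,
          (x:ℂ) ^ ((1 + Complex.I*a/2) - 1) * (1-(x:ℂ)) ^ ((1 - Complex.I*a/2) - 1) := by
    rw [Complex.betaIntegral, intervalIntegral.integral_of_le zero_le_one,
      MeasureTheory.integral_Ioc_eq_integral_Ioo]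
  have hre := Complex.reCLM.integral_comp_comm hIoo
  simp only [Complex.reCLM_apply] at hre
  rw [h1, ← hre, ← MeasureTheory.integral_const_mul]
  exact MeasureTheory.setIntegral_congr_fun measurableSet_Ioo (fun x hx => pointwiseB a hx)

lemma stepC (a : ℝ) (ha : 0 < a) :
    Complex.betaIntegral (1 + Complex.I*a/2) (1 - Complex.I*a/2)
      = ((Real.pi * a / (2 * Real.sinh (Real.pi*a/2)) : ℝ) : ℂ) := by
  set z : ℂ := Complex.I*a/2 with hz_def
  have hz : z ≠ 0 := by
    simp only [hz_def]
    intro h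
    have := congrArg Complex.im h
    simp at this
    exact ha.ne' this
  have hu : 0 < (1 + z).re := by simp [hz_def]
  have hv : 0 < (1 - z).re := by simp [hz_def]
  have hB := Complex.Gamma_mul_Gamma_eq_betaIntegral hu hv
  have hsum : (1+z)+(1-z) = 2 := by ring
  rw [hsum] at hB
  have hG2 : Complex.Gamma 2 = 1 := by
    rw [(by norm_num : (2:ℂ) = 1 + 1), Complex.Gamma_add_one _ one_ne_zero, Complex.Gamma_one,
      one_mul]
  rw [hG2, one_mul] at hB
  rw [← hB]
  have h1z : Complex.Gamma (1 + z) = z * Complex.Gamma z := by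
    rw [add_comm, Complex.Gamma_add_one _ hz]
  rw [h1z, mul_assoc, Complex.Gamma_mul_Gamma_one_sub]
  have hπz : (Real.pi : ℂ) * z = ((Real.pi * a / 2 : ℝ) : ℂ) * Complex.I := by
    simp only [hz_def]; push_cast; ring
  rw [hπz, Complex.sin_mul_I, ← Complex.ofReal_sinh]
  have hs : Real.sinh (Real.pi * a / 2) ≠ 0 :=
    (Real.sinh_pos_iff.mpr (by positivity)).ne'
  have hsC : ((Real.sinh (Real.pi * a / 2) : ℝ) : ℂ) ≠ 0 := by exact_mod_cast hs
  rw [hz_def]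
  field_simp
  rw [Complex.ofReal_div, Complex.ofReal_mul 2, Complex.ofReal_ofNat,
    mul_div_cancel₀ _ (mul_ne_zero two_ne_zero hsC)]
  push_cast
  ring


/-- For every `a > 0`, `∫_{−∞}^{∞} sech² t · cos (a t) dt = π a / sinh (π a / 2)`,
where `sech t = 1 / cosh t`. -/
theorem integral_sech_sq_cos (a : ℝ) (ha : 0 < a) :
    ∫ t : ℝ, ((Real.cosh t)⁻¹) ^ 2 * Real.cos (a * t)
      = Real.pi * a / Real.sinh (Real.pi * a / 2) := by
  rw [stepA a, stepB a, stepC a ha, Complex.ofReal_re]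
  have hs : Real.sinh (Real.pi * a / 2) ≠ 0 :=
    (Real.sinh_pos_iff.mpr (by positivity)).ne'
  field_simp
end
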